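/- Let X be a connected, locally finite simple graph and Y a simple graph, and let a group G act on X and on Y by graph automorphisms, via homomorphisms ρ_X : G → Aut(X) and ρ_Y : G → Aut(Y). Assume that the diagonal action of G on the set V(X) × V(Y) of pairs of vertices is faithful, has only finitely many orbits, and has finite point stabilizers. If the image ρ_Y(G) acts on the vertices of Y with finite stabilizers, then the subgroup ker(ρ_X) · ker(ρ_Y) has finite index in G; consequently, G has a finite-index subgroup isomorphic to ker(ρ_X) × ker(ρ_Y), where the factor ker(ρ_Y) acts trivially on Y and the factor ker(ρ_X) acts trivially on X. -/

import Mathlib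

open SimpleGraph

private lemma pavs_dist_iso {V : Type*} {X : SimpleGraph V} (hconn : X.Connected)
    (f : X ≃g X) (u v : V) : X.dist (f u) (f v) = X.dist u v := by
  have key : ∀ (g : X ≃g X) (a b : V), X.dist (g a) (g b) ≤ X.dist a b := by
    intro g a b
    obtain ⟨p, hp⟩ := (hconn a b).exists_walk_length_eq_dist
    calc X.dist (g a) (g b) ≤ (p.map g.toHom).length := SimpleGraph.dist_le _
      _ = p.length := p.length_map _
      _ = X.dist a b := hp
  refine le_antisymm (key f u v) ?_
  have := key f.symm (f u) (f v)
  simpa using this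

private lemma pavs_ball_finite {V : Type*} {X : SimpleGraph V} (hconn : X.Connected)
    (hlf : ∀ v : V, (X.neighborSet v).Finite) :
    ∀ (R : ℕ) (c : V), {u : V | X.dist c u ≤ R}.Finite := by
  have walkball : ∀ (R : ℕ) (c : V), {u : V | ∃ p : X.Walk c u, p.length ≤ R}.Finite := by
    intro R
    induction R with
    | zero =>
      intro c
      refine (Set.finite_singleton c).subset ?_
      rintro u ⟨p, hp⟩
      have : c = u := SimpleGraph.Walk.eq_of_length_eq_zero (Nat.le_zero.mp hp)
      simp [this]
    | succ R ih =>
      intro c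
      have hsub : {u : V | ∃ p : X.Walk c u, p.length ≤ R + 1} ⊆
          {u : V | ∃ p : X.Walk c u, p.length ≤ R} ∪
            ⋃ x ∈ X.neighborSet c, {u : V | ∃ p : X.Walk x u, p.length ≤ R} := by
        rintro u ⟨p, hp⟩
        cases p with
        | nil => exact Or.inl ⟨SimpleGraph.Walk.nil, Nat.zero_le _⟩
        | cons h q =>
          right
          refine Set.mem_biUnion h ⟨q, ?_⟩
          simpa [SimpleGraph.Walk.length_cons] using hp
      exact ((ih c).union ((hlf c).biUnion fun x _ => ih x)).subset hsub
  intro R c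
  refine (walkball R c).subset ?_
  intro u hu
  simp only [Set.mem_setOf_eq] at hu
  obtain ⟨p, hp⟩ := (hconn c u).exists_walk_length_eq_dist
  exact ⟨p, by rw [hp]; exact hu⟩

private lemma pavs_reps {G α : Type*} [Group G] (S : Set G) (φ : G → α)
    (h : (φ '' S).Finite) :
    ∃ t : Set G, t.Finite ∧ t ⊆ S ∧ ∀ g ∈ S, ∃ a ∈ t, φ a = φ g := by
  classical
  have hsel : ∀ y : α, ∃ g : G, y ∈ φ '' S → (g ∈ S ∧ φ g = y) := by
    intro y
    by_cases hy : y ∈ φ '' S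
    · obtain ⟨g, hg, hgy⟩ := hy
      exact ⟨g, fun _ => ⟨hg, hgy⟩⟩
    · exact ⟨1, fun h' => absurd h' hy⟩
  choose F hF using hsel
  refine ⟨F '' (φ '' S), h.image F, ?_, ?_⟩
  · rintro g ⟨y, hy, rfl⟩
    exact (hF y hy).1
  · intro g hg
    exact ⟨F (φ g), Set.mem_image_of_mem F (Set.mem_image_of_mem φ hg),
      (hF _ (Set.mem_image_of_mem φ hg)).2⟩

/-- Lemma 2.3 ("discrete factor") of the paper, in its combinatorial form: let a group
`G` act on a connected locally finite simple graph `X` and on a simple graph `Y` so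
that the diagonal action on pairs of vertices is faithful, has finitely many orbits
and finite point stabilizers. If the image of `G` in `Aut(Y)` has finite vertex
stabilizers, then `ker ρX · ker ρY` has finite index in `G`; consequently `G` has a
finite-index subgroup isomorphic to `ker ρX × ker ρY`. -/
theorem product_action_virtual_splitting {G V W : Type*} [Group G]
    (X : SimpleGraph V) (Y : SimpleGraph W)
    (hconn : X.Connected) (hlf : ∀ v : V, (X.neighborSet v).Finite)
    (ρX : G →* (X ≃g X)) (ρY : G →* (Y ≃g Y))
    (hfaithful : ∀ g : G, (∀ v : V, ρX g v = v) → (∀ w : W, ρY g w = w) → g = 1)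
    (horb : ∃ s : Finset (V × W), ∀ p : V × W, ∃ g : G, (ρX g p.1, ρY g p.2) ∈ s)
    (hstab : ∀ (v : V) (w : W), {g : G | ρX g v = v ∧ ρY g w = w}.Finite)
    (hdisc : ∀ w : W, {f : Y ≃g Y | f ∈ ρY.range ∧ f w = w}.Finite) :
    (MonoidHom.ker ρX ⊔ MonoidHom.ker ρY).FiniteIndex ∧
      ∃ H : Subgroup G, H.FiniteIndex ∧
        Nonempty (H ≃* (MonoidHom.ker ρX × MonoidHom.ker ρY)) := by
  classical
  set KX := MonoidHom.ker ρX with hKXdef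
  set KY := MonoidHom.ker ρY with hKYdef
  haveI instKX : KX.Normal := MonoidHom.normal_ker ρX
  haveI instKY : KY.Normal := MonoidHom.normal_ker ρY
  -- basic computation rules
  have hmul : ∀ (a b : G) (v : V), ρX (a * b) v = ρX a (ρX b v) := by
    intro a b v; rw [map_mul]; rfl
  have hmulY : ∀ (a b : G) (w : W), ρY (a * b) w = ρY a (ρY b w) := by
    intro a b w; rw [map_mul]; rfl
  have hinvX : ∀ (a : G) (v : V), ρX a⁻¹ (ρX a v) = v := by
    intro a v; rw [← hmul, inv_mul_cancel, map_one]; rfl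
  have hinvX2 : ∀ (a : G) (v : V), ρX a (ρX a⁻¹ v) = v := by
    intro a v; rw [← hmul, mul_inv_cancel, map_one]; rfl
  have hinvY : ∀ (a : G) (w : W), ρY a⁻¹ (ρY a w) = w := by
    intro a w; rw [← hmulY, inv_mul_cancel, map_one]; rfl
  have kerX_apply : ∀ g ∈ KX, ∀ v : V, ρX g v = v := by
    intro g hg v
    rw [hKXdef, MonoidHom.mem_ker] at hg
    rw [hg]; rfl
  have kerY_apply : ∀ g ∈ KY, ∀ w : W, ρY g w = w := by
    intro g hg w
    rw [hKYdef, MonoidHom.mem_ker] at hg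
    rw [hg]; rfl
  have memKX_of : ∀ g : G, (∀ v : V, ρX g v = v) → g ∈ KX := by
    intro g hg
    rw [hKXdef, MonoidHom.mem_ker]
    exact RelIso.ext hg
  have memKY_of : ∀ g : G, (∀ w : W, ρY g w = w) → g ∈ KY := by
    intro g hg
    rw [hKYdef, MonoidHom.mem_ker]
    exact RelIso.ext hg
  -- the covering of G by finitely many cosets of KX ⊔ KY
  have hcover : ∃ t : Set G, t.Finite ∧ ∀ g : G, ∃ a ∈ t, a⁻¹ * g ∈ KX ⊔ KY := by
    by_cases hW : Nonempty W
    case neg =>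
      refine ⟨{1}, Set.finite_singleton 1, fun g => ⟨1, rfl, ?_⟩⟩
      have hgKY : g ∈ KY := memKY_of g (fun w => absurd (Nonempty.intro w) hW)
      simpa using Subgroup.mem_sup_right hgKY
    case pos =>
      obtain ⟨w0⟩ := hW
      obtain ⟨v0⟩ := hconn.nonempty
      obtain ⟨s, hs⟩ := horb
      have hdist : ∀ (g : G) (u v : V), X.dist (ρX g u) (ρX g v) = X.dist u v :=
        fun g => pavs_dist_iso hconn (ρX g)
      have hball := pavs_ball_finite hconn hlf
      -- reps for the w0-stabilizer modulo KY
      have himgS : ((fun g : G => ρY g) '' {g : G | ρY g w0 = w0}).Finite :=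
        (hdisc w0).subset (by rintro f ⟨g, hg, rfl⟩; exact ⟨⟨g, rfl⟩, hg⟩)
      obtain ⟨tS, htSfin, htSsub, htS⟩ := pavs_reps _ _ himgS
      -- reps for elements moving w0 into the second projection of s
      have s1fin : (Prod.fst '' (↑s : Set (V × W))).Finite := s.finite_toSet.image _
      have s2fin : (Prod.snd '' (↑s : Set (V × W))).Finite := s.finite_toSet.image _
      have himgW : ((fun g : G => ρY g w0) ''
          {g : G | ρY g w0 ∈ Prod.snd '' (↑s : Set (V × W))}).Finite :=
        s2fin.subset (by rintro w ⟨g, hg, rfl⟩; exact hg)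
      obtain ⟨tW, htWfin, htWsub, htW⟩ := pavs_reps _ _ himgW
      -- KY has finitely many orbits on V
      set T' : Set V := (fun p : (G × G) × V => ρX ((p.1.2 * p.1.1)⁻¹) p.2) ''
        ((tS ×ˢ tW) ×ˢ (Prod.fst '' (↑s : Set (V × W)))) with hT'def
      have hT'fin : T'.Finite := ((htSfin.prod htWfin).prod s1fin).image _
      have h4 : ∀ v : V, ∃ n ∈ KY, ρX n v ∈ T' := by
        intro v
        obtain ⟨g, hgps⟩ := hs (v, w0)
        have hu : ρX g v ∈ Prod.fst '' (↑s : Set (V × W)) := ⟨_, hgps, rfl⟩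
        have hw : ρY g w0 ∈ Prod.snd '' (↑s : Set (V × W)) := ⟨_, hgps, rfl⟩
        obtain ⟨b, hbtW, hb⟩ := htW g hw
        have hb0 : ρY (b⁻¹ * g) w0 = w0 := by
          rw [hmulY, ← hb]; exact hinvY b w0
        obtain ⟨a, hatS, ha⟩ := htS _ hb0
        refine ⟨a⁻¹ * (b⁻¹ * g), ?_, ?_⟩
        · rw [hKYdef, MonoidHom.mem_ker, map_mul, map_inv, ha, inv_mul_cancel]
        · refine ⟨((a, b), ρX g v), ⟨⟨hatS, hbtW⟩, hu⟩, ?_⟩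
          show ρX ((b * a)⁻¹) (ρX g v) = ρX (a⁻¹ * (b⁻¹ * g)) v
          rw [← hmul]
          congr 1
          group
      -- the constant R
      set Rf : Finset ℕ := insert 0 (hT'fin.toFinset.image (X.dist v0)) with hRfdef
      set R : ℕ := Rf.max' ⟨0, Finset.mem_insert_self 0 _⟩ with hRdef
      have hRT' : ∀ t ∈ T', X.dist v0 t ≤ R := by
        intro t ht
        exact Finset.le_max' _ _ (Finset.mem_insert_of_mem
          (Finset.mem_image_of_mem _ (hT'fin.mem_toFinset.mpr ht)))
      have hdense : ∀ v : V, ∃ n ∈ KY, X.dist (ρX n v0) v ≤ R := by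
        intro v
        obtain ⟨n, hn, hnT⟩ := h4 v
        refine ⟨n⁻¹, inv_mem hn, ?_⟩
        have e : X.dist (ρX n (ρX n⁻¹ v0)) (ρX n v) = X.dist (ρX n⁻¹ v0) v := hdist n _ _
        rw [hinvX2 n v0] at e
        rw [← e]
        exact hRT' _ hnT
      -- the finite set N' and the subgroup M it generates
      set N' : Set G := {n : G | n ∈ KY ∧ X.dist v0 (ρX n v0) ≤ 2 * R + 1} with hN'def
      have hfiber : ∀ u : V, {n : G | n ∈ KY ∧ ρX n v0 = u}.Finite := by
        intro u
        by_cases hne : ∃ n₀, n₀ ∈ KY ∧ ρX n₀ v0 = u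
        · obtain ⟨n₀, hn₀KY, hn₀⟩ := hne
          refine ((hstab v0 w0).image (fun x => n₀ * x)).subset ?_
          rintro n ⟨hnKY, hnv⟩
          refine ⟨n₀⁻¹ * n, ⟨?_, ?_⟩, by group⟩
          · rw [hmul, hnv, ← hn₀]; exact hinvX n₀ v0
          · exact kerY_apply _ (mul_mem (inv_mem hn₀KY) hnKY) w0
        · refine Set.Finite.subset Set.finite_empty ?_
          rintro n ⟨h1, h2⟩; exact absurd ⟨n, h1, h2⟩ hne
      have hN'fin : N'.Finite := by
        refine ((hball (2 * R + 1) v0).biUnion (fun u _ => hfiber u)).subset ?_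
        rintro n ⟨hn, hd⟩
        exact Set.mem_biUnion hd ⟨hn, rfl⟩
      set M : Subgroup G := Subgroup.closure N' with hMdef
      have hMKY : M ≤ KY := (Subgroup.closure_le _).mpr (fun n hn => hn.1)
      -- M-orbit of v0 is R-dense
      have hMdense : ∀ v : V, ∃ m ∈ M, X.dist (ρX m v0) v ≤ R := by
        have step : ∀ a b : V, X.Adj a b → (∃ m ∈ M, X.dist (ρX m v0) a ≤ R) →
            (∃ m ∈ M, X.dist (ρX m v0) b ≤ R) := by
          rintro a b hab ⟨m, hmM, hma⟩
          obtain ⟨n, hnKY, hnb⟩ := hdense b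
          have key : m⁻¹ * n ∈ N' := by
            refine ⟨mul_mem (inv_mem (hMKY hmM)) hnKY, ?_⟩
            have e1 : X.dist (ρX m⁻¹ (ρX m v0)) (ρX m⁻¹ (ρX n v0)) =
                X.dist (ρX m v0) (ρX n v0) := hdist m⁻¹ _ _
            rw [hinvX m v0] at e1
            rw [hmul, e1]
            have t1 : X.dist (ρX m v0) (ρX n v0) ≤
                X.dist (ρX m v0) a + X.dist a (ρX n v0) := hconn.dist_triangle
            have t2 : X.dist a (ρX n v0) ≤ X.dist a b + X.dist b (ρX n v0) :=
              hconn.dist_triangle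
            have t3 : X.dist a b ≤ 1 := by
              rw [SimpleGraph.dist_eq_one_iff_adj.mpr hab]
            have t4 : X.dist b (ρX n v0) ≤ R := by
              rw [SimpleGraph.dist_comm]; exact hnb
            omega
          refine ⟨n, ?_, hnb⟩
          have h1 : m⁻¹ * n ∈ M := Subgroup.subset_closure key
          have h2 := mul_mem hmM h1
          simpa using h2
        have walkind : ∀ (a b : V) (p : X.Walk a b),
            (∃ m ∈ M, X.dist (ρX m v0) a ≤ R) → (∃ m ∈ M, X.dist (ρX m v0) b ≤ R) := by
          intro a b p
          induction p with
          | nil => exact id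
          | cons h q ih => intro ha; exact ih (step _ _ h ha)
        intro v
        have hone : ρX (1 : G) v0 = v0 := by rw [map_one]; rfl
        obtain ⟨p⟩ := hconn.preconnected v0 v
        exact walkind v0 v p ⟨1, one_mem _, by rw [hone, SimpleGraph.dist_self]; exact Nat.zero_le _⟩
      -- the stabilizer of v0 (for the X-action) and its conjugation action on N'
      set S0 : Set G := {g : G | ρX g v0 = v0} with hS0def
      have hS0inv : ∀ g ∈ S0, ρX g⁻¹ v0 = v0 := by
        intro g hg
        have hg' : ρX g v0 = v0 := hg
        conv_lhs => rw [← hg']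
        exact hinvX g v0
      have hconjN' : ∀ g ∈ S0, ∀ n ∈ N', g * n * g⁻¹ ∈ N' := by
        intro g hg n hn
        refine ⟨instKY.conj_mem n hn.1 g, ?_⟩
        have e : ρX (g * n * g⁻¹) v0 = ρX g (ρX n v0) := by
          rw [hmul, hmul, hS0inv g hg]
        have e2 : X.dist (ρX g v0) (ρX g (ρX n v0)) = X.dist v0 (ρX n v0) :=
          hdist g _ _
        have hg' : ρX g v0 = v0 := hg
        rw [hg'] at e2
        rw [e, e2]
        exact hn.2
      -- reps for S0 modulo the centralizer C0
      haveI : Finite ↥N' := hN'fin.to_subtype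
      have himgB : ((fun g : G => fun n : ↥N' => g * (n : G) * g⁻¹) '' S0).Finite := by
        refine (Set.Finite.pi' (fun _ : ↥N' => hN'fin)).subset ?_
        rintro f ⟨g, hg, rfl⟩
        intro n
        exact hconjN' g hg n n.2
      obtain ⟨tB, htBfin, htBsub, htB⟩ := pavs_reps _ _ himgB
      set C0 : Set G := {x : G | x ∈ S0 ∧ ∀ n ∈ N', x * n * x⁻¹ = n} with hC0def
      have hS0toC0 : ∀ g ∈ S0, ∃ c ∈ tB, c⁻¹ * g ∈ C0 := by
        intro g hg
        obtain ⟨c, hctB, hc⟩ := htB g hg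
        have hcS0 : c ∈ S0 := htBsub hctB
        refine ⟨c, hctB, ⟨?_, ?_⟩⟩
        · show ρX (c⁻¹ * g) v0 = v0
          have hg' : ρX g v0 = v0 := hg
          rw [hmul, hg', hS0inv c hcS0]
        · intro n hn
          have hcn : c * n * c⁻¹ = g * n * g⁻¹ := congrFun hc ⟨n, hn⟩
          have h2 : c⁻¹ * (g * n * g⁻¹) * c = n := by rw [← hcn]; group
          calc (c⁻¹ * g) * n * (c⁻¹ * g)⁻¹ = c⁻¹ * (g * n * g⁻¹) * c := by group
            _ = n := h2
      -- elements of C0 centralize M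
      have hC0M : ∀ x ∈ C0, ∀ m ∈ M, x * m = m * x := by
        intro x hx m hm
        have hle : M ≤ Subgroup.centralizer {x} := by
          rw [hMdef]
          refine (Subgroup.closure_le _).mpr ?_
          intro n hn
          rw [SetLike.mem_coe, Subgroup.mem_centralizer_iff]
          intro h hh
          rw [Set.mem_singleton_iff] at hh
          subst hh
          have := hx.2 n hn
          calc h * n = (h * n * h⁻¹) * h := by group
            _ = n * h := by rw [this]
        have hmem := hle hm
        exact Subgroup.mem_centralizer_iff.mp hmem x rfl
      -- reps for C0 modulo KX
      haveI : Finite ↥{u : V | X.dist v0 u ≤ R} := (hball R v0).to_subtype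
      have himgC : ((fun g : G => fun u : ↥{u : V | X.dist v0 u ≤ R} => ρX g (u : V)) ''
          C0).Finite := by
        refine (Set.Finite.pi'
          (fun u : ↥{u : V | X.dist v0 u ≤ R} => hball (2 * R) (u : V))).subset ?_
        rintro f ⟨g, hg, rfl⟩
        intro u
        obtain ⟨m, hmM, hmu⟩ := hMdense (u : V)
        have fix : ρX g (ρX m v0) = ρX m v0 := by
          have hg1 : ρX g v0 = v0 := hg.1
          rw [← hmul, hC0M g hg m hmM, hmul, hg1]
        have e : X.dist (ρX g (u : V)) (ρX g (ρX m v0)) = X.dist (u : V) (ρX m v0) :=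
          hdist g _ _
        rw [fix] at e
        show X.dist (u : V) (ρX g (u : V)) ≤ 2 * R
        have hmu' : X.dist (u : V) (ρX m v0) ≤ R := by
          rw [SimpleGraph.dist_comm]; exact hmu
        have t1 : X.dist (u : V) (ρX g (u : V)) ≤
            X.dist (u : V) (ρX m v0) + X.dist (ρX m v0) (ρX g (u : V)) :=
          hconn.dist_triangle
        have t2 : X.dist (ρX m v0) (ρX g (u : V)) = X.dist (u : V) (ρX m v0) := by
          rw [SimpleGraph.dist_comm]; exact e
        omega
      obtain ⟨tC, htCfin, htCsub, htC⟩ := pavs_reps _ _ himgC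
      have hC0toKX : ∀ g ∈ C0, ∃ d ∈ tC, d⁻¹ * g ∈ KX := by
        intro g hg
        obtain ⟨d, hdtC, hd⟩ := htC g hg
        have hdC0 : d ∈ C0 := htCsub hdtC
        refine ⟨d, hdtC, memKX_of _ ?_⟩
        intro v
        obtain ⟨m, hmM, hmv⟩ := hMdense v
        have hu : X.dist v0 (ρX m⁻¹ v) ≤ R := by
          have e : X.dist (ρX m⁻¹ (ρX m v0)) (ρX m⁻¹ v) = X.dist (ρX m v0) v :=
            hdist m⁻¹ _ _
          rw [hinvX m v0] at e
          rw [e]; exact hmv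
        have hede : ρX d (ρX m⁻¹ v) = ρX g (ρX m⁻¹ v) := congrFun hd ⟨ρX m⁻¹ v, hu⟩
        have hvm : ρX m (ρX m⁻¹ v) = v := hinvX2 m v
        have hgv : ρX g v = ρX m (ρX g (ρX m⁻¹ v)) := by
          conv_lhs => rw [← hvm, ← hmul, hC0M g hg m hmM, hmul]
        have hdv : ρX d v = ρX m (ρX d (ρX m⁻¹ v)) := by
          conv_lhs => rw [← hvm, ← hmul, hC0M d hdC0 m hmM, hmul]
        have hgd : ρX g v = ρX d v := by
          rw [hgv, hdv, hede]
        show ρX (d⁻¹ * g) v = v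
        rw [hmul, hgd]
        exact hinvX d v
      -- reps for G modulo KY · S0
      have himgA : ((fun g : G => ρX g v0) '' {g : G | ρX g v0 ∈ T'}).Finite :=
        hT'fin.subset (by rintro u ⟨g, hg, rfl⟩; exact hg)
      obtain ⟨tA, htAfin, htAsub, htA⟩ := pavs_reps _ _ himgA
      have h11 : ∀ g : G, ∃ n ∈ KY, ∃ a ∈ tA, a⁻¹ * (n * g) ∈ S0 := by
        intro g
        obtain ⟨n, hnKY, hnT⟩ := h4 (ρX g v0)
        have hng : ρX (n * g) v0 ∈ T' := by rw [hmul]; exact hnT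
        obtain ⟨a, hatA, ha⟩ := htA (n * g) hng
        refine ⟨n, hnKY, a, hatA, ?_⟩
        show ρX (a⁻¹ * (n * g)) v0 = v0
        rw [hmul, ← ha]
        exact hinvX a v0
      -- assemble the cover
      refine ⟨(fun p : (G × G) × G => p.1.1 * p.1.2 * p.2) '' ((tA ×ˢ tB) ×ˢ tC),
        ((htAfin.prod htBfin).prod htCfin).image _, ?_⟩
      intro g
      obtain ⟨n, hnKY, a, hatA, hsS0⟩ := h11 g
      obtain ⟨c, hctB, hxC0⟩ := hS0toC0 _ hsS0
      obtain ⟨d, hdtC, hkKX⟩ := hC0toKX _ hxC0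
      refine ⟨a * c * d, ⟨((a, c), d), ⟨⟨hatA, hctB⟩, hdtC⟩, rfl⟩, ?_⟩
      have keyid : (a * c * d)⁻¹ * g =
          ((a * c * d)⁻¹ * n⁻¹ * ((a * c * d)⁻¹)⁻¹) *
            (d⁻¹ * (c⁻¹ * (a⁻¹ * (n * g)))) := by group
      rw [keyid]
      refine mul_mem (Subgroup.mem_sup_right ?_) (Subgroup.mem_sup_left hkKX)
      exact instKY.conj_mem n⁻¹ (inv_mem hnKY) ((a * c * d)⁻¹)
  -- finite index from the cover
  obtain ⟨t, htfin, hcov⟩ := hcover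
  haveI hfinQ : Finite (G ⧸ (KX ⊔ KY)) := by
    have hsurj : (Set.univ : Set (G ⧸ (KX ⊔ KY))) ⊆ QuotientGroup.mk '' t := by
      rintro q -
      obtain ⟨g, rfl⟩ := QuotientGroup.mk_surjective q
      obtain ⟨a, hat, haJ⟩ := hcov g
      exact ⟨a, hat, (QuotientGroup.eq).mpr haJ⟩
    exact Set.finite_univ_iff.mp ((htfin.image _).subset hsurj)
  have hJfi : (KX ⊔ KY).FiniteIndex := Subgroup.finiteIndex_of_finite_quotient
  refine ⟨hJfi, (KX ⊔ KY), hJfi, ?_⟩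
  -- the internal direct product structure
  have hdisj : Disjoint KX KY := by
    rw [Subgroup.disjoint_def]
    intro g hgX hgY
    exact hfaithful g (kerX_apply g hgX) (kerY_apply g hgY)
  have hcomm : ∀ (m : ↥KX) (n : ↥KY), Commute (KX.subtype m) (KY.subtype n) :=
    fun m n => Subgroup.commute_of_normal_of_disjoint KX KY instKX instKY hdisj
      (m : G) (n : G) m.2 n.2
  set f : (↥KX × ↥KY) →* G := MonoidHom.noncommCoprod KX.subtype KY.subtype hcomm with hfdef
  have hfinj : Function.Injective f := by
    rw [← MonoidHom.ker_eq_bot_iff]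
    rw [eq_bot_iff]
    rintro ⟨m, n⟩ hmn
    rw [MonoidHom.mem_ker] at hmn
    have hmn' : (m : G) * (n : G) = 1 := hmn
    have hmKY : (m : G) ∈ KY := by
      have : (m : G) = (n : G)⁻¹ := eq_inv_of_mul_eq_one_left hmn'
      rw [this]
      exact inv_mem n.2
    have hm1 : (m : G) = 1 := Subgroup.disjoint_def.mp hdisj m.2 hmKY
    have hn1 : (n : G) = 1 := by
      rw [hm1, one_mul] at hmn'
      exact hmn'
    rw [Subgroup.mem_bot]
    exact Prod.ext (Subtype.ext hm1) (Subtype.ext hn1)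
  have hfrange : f.range = KX ⊔ KY := by
    apply le_antisymm
    · rintro x ⟨⟨m, n⟩, rfl⟩
      exact mul_mem (Subgroup.mem_sup_left m.2) (Subgroup.mem_sup_right n.2)
    · rw [sup_le_iff]
      constructor
      · intro x hx
        exact ⟨(⟨x, hx⟩, 1), by simp [hfdef]⟩
      · intro x hx
        exact ⟨(1, ⟨x, hx⟩), by simp [hfdef]⟩
  exact ⟨((MulEquiv.subgroupCongr hfrange.symm).trans
    (MonoidHom.ofInjective hfinj).symm : (↥(KX ⊔ KY) ≃* (↥KX × ↥KY)))⟩
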